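/- arXiv:2108.12042 — 4 statements merged into one kernel-verified Lean document; each statement's English description precedes it below -/
import Mathlib

section
/- Let H ∈ (0,1), σ > 0, x₀ ∈ ℝ, and a, b ∈ ℝ with κ := (a+b)² − 2^{2H}·a·b > 0. Define P : ℝ × (0,∞) → ℝ by P(x,t) = (2πσ²κt^{2H})^{−1/2} · exp(−(x − x₀ + (1/2)σ²κt^{2H})²/(2σ²κt^{2H})). Then for all x ∈ ℝ and t > 0, P satisfies the generalized fractional Fokker–Planck equation ∂P/∂t = σ²·H·κ·t^{2H−1}·(∂²P/∂x² + ∂P/∂x). -/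
open Real

private lemma gfbm_Qx (x₀ v x : ℝ) (hv : 0 < v) :
    HasDerivAt (fun x' : ℝ => (2 * π * v) ^ (-(1:ℝ)/2) *
        Real.exp (-(x' - x₀ + v / 2) ^ 2 / (2 * v)))
      ((2 * π * v) ^ (-(1:ℝ)/2) * Real.exp (-(x - x₀ + v / 2) ^ 2 / (2 * v)) *
        (-(x - x₀ + v / 2) / v)) x := by
  have hu : HasDerivAt (fun x' : ℝ => x' - x₀ + v / 2) 1 x := by
    simpa using ((hasDerivAt_id x).sub_const x₀).add_const (v / 2)
  have hE : HasDerivAt (fun x' : ℝ => -(x' - x₀ + v / 2) ^ 2 / (2 * v))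
      (-(2 * (x - x₀ + v / 2)) / (2 * v)) x := by
    simpa using (hu.pow 2).neg.div_const (2 * v)
  have h := hE.exp.const_mul ((2 * π * v) ^ (-(1:ℝ)/2))
  refine h.congr_deriv ?_
  field_simp

private lemma gfbm_Qxx (x₀ v x : ℝ) (hv : 0 < v) :
    HasDerivAt (fun x' : ℝ => (2 * π * v) ^ (-(1:ℝ)/2) *
        Real.exp (-(x' - x₀ + v / 2) ^ 2 / (2 * v)) * (-(x' - x₀ + v / 2) / v))
      ((2 * π * v) ^ (-(1:ℝ)/2) * Real.exp (-(x - x₀ + v / 2) ^ 2 / (2 * v)) *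
        ((x - x₀ + v / 2) ^ 2 / v ^ 2 - 1 / v)) x := by
  have h1 := gfbm_Qx x₀ v x hv
  have h2 : HasDerivAt (fun x' : ℝ => -(x' - x₀ + v / 2) / v) (-1 / v) x := by
    simpa using (((hasDerivAt_id x).sub_const x₀).add_const (v / 2)).neg.div_const v
  have h := h1.mul h2
  refine h.congr_deriv ?_
  field_simp
  ring

private lemma gfbm_Qv (x₀ x v : ℝ) (hv : 0 < v) :
    HasDerivAt (fun v' : ℝ => (2 * π * v') ^ (-(1:ℝ)/2) *
        Real.exp (-(x - x₀ + v' / 2) ^ 2 / (2 * v')))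
      ((2 * π * v) ^ (-(1:ℝ)/2) * Real.exp (-(x - x₀ + v / 2) ^ 2 / (2 * v)) *
        (-(1 / (2 * v)) + ((x - x₀ + v / 2) ^ 2 - (x - x₀ + v / 2) * v) / (2 * v ^ 2))) v := by
  have h2π : (0:ℝ) < 2 * π * v := by positivity
  have hA : HasDerivAt (fun v' : ℝ => (2 * π * v') ^ (-(1:ℝ)/2))
      ((2 * π * v) ^ (-(1:ℝ)/2) * (-(1 / (2 * v)))) v := by
    have hlin : HasDerivAt (fun v' : ℝ => 2 * π * v') (2 * π) v := by
      simpa using (hasDerivAt_id v).const_mul (2 * π)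
    have hr := (Real.hasDerivAt_rpow_const (p := -(1:ℝ)/2) (Or.inl h2π.ne')).comp v hlin
    refine hr.congr_deriv ?_
    rw [show (-(1:ℝ)/2 - 1) = (-(1:ℝ)/2) + (-1) by ring, Real.rpow_add h2π,
      Real.rpow_neg_one]
    field_simp
  have hu : HasDerivAt (fun v' : ℝ => x - x₀ + v' / 2) (1 / 2) v := by
    simpa using ((hasDerivAt_id v).div_const 2).const_add (x - x₀)
  have hN : HasDerivAt (fun v' : ℝ => -(x - x₀ + v' / 2) ^ 2)
      (-(2 * (x - x₀ + v / 2) * (1 / 2))) v := by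
    simpa using (hu.fun_pow 2).fun_neg
  have hD : HasDerivAt (fun v' : ℝ => 2 * v') 2 v := by
    simpa using (hasDerivAt_id v).const_mul 2
  have hE := hN.fun_div hD (by positivity)
  have h := hA.fun_mul hE.exp
  refine h.congr_deriv ?_
  field_simp
  ring

/-- **The transition density of the log-price solves the generalized fractional
Fokker–Planck equation.**  With `κ = (a+b)² - 2^{2H} a b > 0`, the function
`P(x,t) = (2πσ²κ t^{2H})^{-1/2} exp(-(x - x₀ + ½σ²κ t^{2H})²/(2σ²κ t^{2H}))`
satisfies `∂P/∂t = σ² H κ t^{2H-1} (∂²P/∂x² + ∂P/∂x)` for all `x ∈ ℝ`, `t > 0`. -/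
theorem gfbm_log_price_fokker_planck
    (H : ℝ) (hH : H ∈ Set.Ioo (0 : ℝ) 1)
    (σ : ℝ) (hσ : 0 < σ) (x₀ : ℝ) (a b : ℝ)
    (κ : ℝ) (hκdef : κ = (a + b) ^ 2 - (2 : ℝ) ^ (2 * H) * a * b) (hκ : 0 < κ)
    (P : ℝ → ℝ → ℝ)
    (hP : ∀ x : ℝ, ∀ t : ℝ, 0 < t →
      P x t = (2 * π * σ ^ 2 * κ * t ^ (2 * H)) ^ (-(1 : ℝ) / 2) *
        Real.exp (-(x - x₀ + (1 / 2) * σ ^ 2 * κ * t ^ (2 * H)) ^ 2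
          / (2 * σ ^ 2 * κ * t ^ (2 * H)))) :
    ∀ x : ℝ, ∀ t : ℝ, 0 < t →
      deriv (fun t' => P x t') t
        = σ ^ 2 * H * κ * t ^ (2 * H - 1) *
            (deriv (deriv (fun x' => P x' t)) x + deriv (fun x' => P x' t) x) := by
  intro x t ht
  have htH : (0:ℝ) < t ^ (2 * H) := Real.rpow_pos_of_pos ht _
  have hv : (0:ℝ) < σ ^ 2 * κ * t ^ (2 * H) := by positivity
  -- the x-derivatives
  have hPxfun : (fun x' => P x' t) = fun x' : ℝ =>
      (2 * π * (σ ^ 2 * κ * t ^ (2 * H))) ^ (-(1:ℝ)/2) *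
        Real.exp (-(x' - x₀ + (σ ^ 2 * κ * t ^ (2 * H)) / 2) ^ 2
          / (2 * (σ ^ 2 * κ * t ^ (2 * H)))) := by
    funext y
    rw [hP y t ht,
      show (2:ℝ) * π * σ ^ 2 * κ * t ^ (2 * H) = 2 * π * (σ ^ 2 * κ * t ^ (2 * H)) by ring,
      show (1/2:ℝ) * σ ^ 2 * κ * t ^ (2 * H) = (σ ^ 2 * κ * t ^ (2 * H)) / 2 by ring,
      show (2:ℝ) * σ ^ 2 * κ * t ^ (2 * H) = 2 * (σ ^ 2 * κ * t ^ (2 * H)) by ring]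
  have hderivP : deriv (fun x' => P x' t) = fun x' : ℝ =>
      (2 * π * (σ ^ 2 * κ * t ^ (2 * H))) ^ (-(1:ℝ)/2) *
        Real.exp (-(x' - x₀ + (σ ^ 2 * κ * t ^ (2 * H)) / 2) ^ 2
          / (2 * (σ ^ 2 * κ * t ^ (2 * H)))) *
        (-(x' - x₀ + (σ ^ 2 * κ * t ^ (2 * H)) / 2) / (σ ^ 2 * κ * t ^ (2 * H))) := by
    funext y
    rw [hPxfun]
    exact (gfbm_Qx x₀ _ y hv).deriv
  have hxx : deriv (deriv (fun x' => P x' t)) x =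
      (2 * π * (σ ^ 2 * κ * t ^ (2 * H))) ^ (-(1:ℝ)/2) *
        Real.exp (-(x - x₀ + (σ ^ 2 * κ * t ^ (2 * H)) / 2) ^ 2
          / (2 * (σ ^ 2 * κ * t ^ (2 * H)))) *
        ((x - x₀ + (σ ^ 2 * κ * t ^ (2 * H)) / 2) ^ 2 / (σ ^ 2 * κ * t ^ (2 * H)) ^ 2
          - 1 / (σ ^ 2 * κ * t ^ (2 * H))) := by
    rw [hderivP]
    exact (gfbm_Qxx x₀ _ x hv).deriv
  have hx : deriv (fun x' => P x' t) x =
      (2 * π * (σ ^ 2 * κ * t ^ (2 * H))) ^ (-(1:ℝ)/2) *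
        Real.exp (-(x - x₀ + (σ ^ 2 * κ * t ^ (2 * H)) / 2) ^ 2
          / (2 * (σ ^ 2 * κ * t ^ (2 * H)))) *
        (-(x - x₀ + (σ ^ 2 * κ * t ^ (2 * H)) / 2) / (σ ^ 2 * κ * t ^ (2 * H))) := by
    rw [hderivP]
  -- the t-derivative
  have hvt : HasDerivAt (fun t' : ℝ => σ ^ 2 * κ * t' ^ (2 * H))
      (σ ^ 2 * κ * (2 * H * t ^ (2 * H - 1))) t :=
    (Real.hasDerivAt_rpow_const (Or.inl ht.ne')).const_mul (σ ^ 2 * κ)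
  have hcomp := (gfbm_Qv x₀ x (σ ^ 2 * κ * t ^ (2 * H)) hv).comp t hvt
  have hevent : (fun t' => P x t') =ᶠ[nhds t]
      ((fun v' : ℝ => (2 * π * v') ^ (-(1:ℝ)/2) *
          Real.exp (-(x - x₀ + v' / 2) ^ 2 / (2 * v'))) ∘
        (fun t' : ℝ => σ ^ 2 * κ * t' ^ (2 * H))) := by
    filter_upwards [eventually_gt_nhds ht] with s hs
    simp only [Function.comp]
    rw [hP x s hs,
      show (2:ℝ) * π * σ ^ 2 * κ * s ^ (2 * H) = 2 * π * (σ ^ 2 * κ * s ^ (2 * H)) by ring,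
      show (1/2:ℝ) * σ ^ 2 * κ * s ^ (2 * H) = (σ ^ 2 * κ * s ^ (2 * H)) / 2 by ring,
      show (2:ℝ) * σ ^ 2 * κ * s ^ (2 * H) = 2 * (σ ^ 2 * κ * s ^ (2 * H)) by ring]
  rw [hevent.deriv_eq, hcomp.deriv, hxx, hx]
  have hVne : (σ ^ 2 * κ * t ^ (2 * H)) ≠ 0 := hv.ne'
  field_simp
  ring
end

section
/- Let H ∈ (0,1), σ > 0, r ∈ ℝ, S₀ > 0, and a, b ∈ ℝ with κ := (a+b)² − 2^{2H}·a·b > 0. Define P : (0,∞) × (0,∞) → ℝ by P(S,t) = (S·√(2πσ²κt^{2H}))^{−1} · exp(−(ln(S/S₀) − rt + (1/2)σ²κt^{2H})²/(2σ²κt^{2H})). Then for all S > 0 and t > 0, P satisfies the Fokker–Planck equation of the generalized fractional Black–Scholes price process: ∂P/∂t = H·κ·t^{2H−1}·∂²(σ²S²P)/∂S² − ∂(rSP)/∂S. -/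
open Real

lemma gfbm_aux1 (S₀ A V W : ℝ) (hS₀ : 0 < S₀) (hV : 0 < V) (hW : 0 < W)
    (x : ℝ) (hx : 0 < x) :
    HasDerivAt (fun y => (y * W)⁻¹ *
        Real.exp (-(Real.log (y / S₀) - A + V / 2) ^ 2 / (2 * V)))
      (-((x * W)⁻¹ * Real.exp (-(Real.log (x / S₀) - A + V / 2) ^ 2 / (2 * V)) / x) *
        (1 + (Real.log (x / S₀) - A + V / 2) / V)) x := by
  have hx0 : x ≠ 0 := hx.ne'
  have hlog : HasDerivAt (fun y => Real.log (y / S₀) - A + V / 2) x⁻¹ x := by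
    have h := ((((hasDerivAt_id x).div_const S₀).log (by positivity)).sub_const A).add_const (V / 2)
    refine h.congr_deriv ?_
    simp only [id]
    field_simp
  have hexp : HasDerivAt
      (fun y => Real.exp (-(Real.log (y / S₀) - A + V / 2) ^ 2 / (2 * V)))
      (Real.exp (-(Real.log (x / S₀) - A + V / 2) ^ 2 / (2 * V)) *
        (-((2 : ℝ) * (Real.log (x / S₀) - A + V / 2) ^ 1 * x⁻¹) / (2 * V))) x :=
    (((hlog.pow 2).neg).div_const (2 * V)).exp
  have hinv : HasDerivAt (fun y => (y * W)⁻¹) (-(1 * W) / (x * W) ^ 2) x :=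
    ((hasDerivAt_id x).mul_const W).inv (by positivity)
  have h := hinv.mul hexp
  refine h.congr_deriv ?_
  field_simp
  ring

lemma gfbm_aux_sq (S₀ A V W c : ℝ) (hS₀ : 0 < S₀) (hV : 0 < V) (hW : 0 < W)
    (x : ℝ) (hx : 0 < x) :
    HasDerivAt (fun y => c * y ^ 2 * ((y * W)⁻¹ *
        Real.exp (-(Real.log (y / S₀) - A + V / 2) ^ 2 / (2 * V))))
      (c * x * ((x * W)⁻¹ * Real.exp (-(Real.log (x / S₀) - A + V / 2) ^ 2 / (2 * V))) *
        (1 - (Real.log (x / S₀) - A + V / 2) / V)) x := by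
  have hx0 : x ≠ 0 := hx.ne'
  have h := ((hasDerivAt_pow 2 x).const_mul c).mul (gfbm_aux1 S₀ A V W hS₀ hV hW x hx)
  refine h.congr_deriv ?_
  field_simp
  ring

lemma gfbm_aux_r (S₀ A V W c : ℝ) (hS₀ : 0 < S₀) (hV : 0 < V) (hW : 0 < W)
    (x : ℝ) (hx : 0 < x) :
    HasDerivAt (fun y => c * y * ((y * W)⁻¹ *
        Real.exp (-(Real.log (y / S₀) - A + V / 2) ^ 2 / (2 * V))))
      (-(c * ((x * W)⁻¹ * Real.exp (-(Real.log (x / S₀) - A + V / 2) ^ 2 / (2 * V))) *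
          (Real.log (x / S₀) - A + V / 2) / V)) x := by
  have hx0 : x ≠ 0 := hx.ne'
  have h := ((hasDerivAt_id x).const_mul c).mul (gfbm_aux1 S₀ A V W hS₀ hV hW x hx)
  refine h.congr_deriv ?_
  simp only [id]
  field_simp
  ring

lemma gfbm_aux_g (S₀ A V W c : ℝ) (hS₀ : 0 < S₀) (hV : 0 < V) (hW : 0 < W)
    (x : ℝ) (hx : 0 < x) :
    HasDerivAt (fun y => c * y * ((y * W)⁻¹ *
        Real.exp (-(Real.log (y / S₀) - A + V / 2) ^ 2 / (2 * V))) *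
        (1 - (Real.log (y / S₀) - A + V / 2) / V))
      (c * ((x * W)⁻¹ * Real.exp (-(Real.log (x / S₀) - A + V / 2) ^ 2 / (2 * V))) *
        ((Real.log (x / S₀) - A + V / 2) ^ 2 / V ^ 2
          - (Real.log (x / S₀) - A + V / 2) / V - 1 / V)) x := by
  have hx0 : x ≠ 0 := hx.ne'
  have hlog : HasDerivAt (fun y => Real.log (y / S₀) - A + V / 2) x⁻¹ x := by
    have h := ((((hasDerivAt_id x).div_const S₀).log (by positivity)).sub_const A).add_const (V / 2)
    refine h.congr_deriv ?_
    simp only [id]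
    field_simp
  have hfirst := ((hasDerivAt_id x).const_mul c).mul (gfbm_aux1 S₀ A V W hS₀ hV hW x hx)
  have hsecond := (hlog.div_const V).const_sub 1
  have h := hfirst.mul hsecond
  refine h.congr_deriv ?_
  simp only [id, Pi.mul_apply]
  field_simp
  ring

lemma gfbm_aux_t (c r u0 H t S : ℝ) (hc : 0 < c) (ht : 0 < t) (hS : 0 < S) :
    HasDerivAt (fun t' => (S * Real.sqrt (2 * π * (c * t' ^ (2 * H))))⁻¹ *
        Real.exp (-(u0 - r * t' + c * t' ^ (2 * H) / 2) ^ 2 / (2 * (c * t' ^ (2 * H)))))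
      ((S * Real.sqrt (2 * π * (c * t ^ (2 * H))))⁻¹ *
        Real.exp (-(u0 - r * t + c * t ^ (2 * H) / 2) ^ 2 / (2 * (c * t ^ (2 * H)))) *
        (c * (2 * H * t ^ (2 * H - 1)) / 2 *
            ((u0 - r * t + c * t ^ (2 * H) / 2) ^ 2 / (c * t ^ (2 * H)) ^ 2
              - (u0 - r * t + c * t ^ (2 * H) / 2) / (c * t ^ (2 * H))
              - 1 / (c * t ^ (2 * H)))
          + r * (u0 - r * t + c * t ^ (2 * H) / 2) / (c * t ^ (2 * H)))) t := by
  have hπ := Real.pi_pos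
  have htp : (0 : ℝ) < t ^ (2 * H) := Real.rpow_pos_of_pos ht _
  have hV : (0 : ℝ) < c * t ^ (2 * H) := by positivity
  have hA : HasDerivAt (fun t' => c * t' ^ (2 * H)) (c * (2 * H * t ^ (2 * H - 1))) t :=
    (Real.hasDerivAt_rpow_const (Or.inl ht.ne')).const_mul c
  have hsq : HasDerivAt (fun t' => Real.sqrt (2 * π * (c * t' ^ (2 * H))))
      ((2 * π * (c * (2 * H * t ^ (2 * H - 1)))) /
        (2 * Real.sqrt (2 * π * (c * t ^ (2 * H))))) t :=
    (hA.const_mul (2 * π)).sqrt (by positivity)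
  have hWpos : (0 : ℝ) < Real.sqrt (2 * π * (c * t ^ (2 * H))) :=
    Real.sqrt_pos.mpr (by positivity)
  have hinv := (hsq.const_mul S).inv (by positivity :
      S * Real.sqrt (2 * π * (c * t ^ (2 * H))) ≠ 0)
  have hu : HasDerivAt (fun t' => u0 - r * t' + c * t' ^ (2 * H) / 2)
      (0 - r * 1 + c * (2 * H * t ^ (2 * H - 1)) / 2) t :=
    ((hasDerivAt_const t u0).sub ((hasDerivAt_id t).const_mul r)).add (hA.div_const 2)
  have hfrac := (((hu.pow 2).neg).div (hA.const_mul 2) (by positivity))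
  have h := hinv.mul hfrac.exp
  refine h.congr_deriv ?_
  simp only [Pi.inv_apply, Pi.neg_apply, Pi.pow_apply, Pi.div_apply]
  set W := Real.sqrt (2 * π * (c * t ^ (2 * H))) with hWdef
  have hW2 : W ^ 2 = 2 * π * (c * t ^ (2 * H)) := Real.sq_sqrt (by positivity)
  set V := c * t ^ (2 * H) with hVdef
  set V' := c * (2 * H * t ^ (2 * H - 1)) with hV'def
  have key : 2 * π * V' / (2 * W) = W * V' / (2 * V) := by
    rw [div_eq_div_iff (by positivity) (by positivity)]
    linear_combination (-2 * V') * hW2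
  rw [key]
  field_simp
  ring

/-- **The transition density of the stock price solves the Fokker–Planck equation of
the generalized fractional Black–Scholes model.**  With `κ = (a+b)² - 2^{2H} a b > 0`,
the function
`P(S,t) = (S √(2πσ²κ t^{2H}))⁻¹ exp(-(ln(S/S₀) - r t + ½σ²κ t^{2H})²/(2σ²κ t^{2H}))`
satisfies `∂P/∂t = H κ t^{2H-1} ∂²(σ²S²P)/∂S² - ∂(r S P)/∂S` for all `S > 0`, `t > 0`. -/
theorem gfbm_price_fokker_planck
    (H : ℝ) (hH : H ∈ Set.Ioo (0 : ℝ) 1)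
    (σ : ℝ) (hσ : 0 < σ) (r : ℝ) (S₀ : ℝ) (hS₀ : 0 < S₀) (a b : ℝ)
    (κ : ℝ) (hκdef : κ = (a + b) ^ 2 - (2 : ℝ) ^ (2 * H) * a * b) (hκ : 0 < κ)
    (P : ℝ → ℝ → ℝ)
    (hP : ∀ S : ℝ, 0 < S → ∀ t : ℝ, 0 < t →
      P S t = (S * Real.sqrt (2 * π * σ ^ 2 * κ * t ^ (2 * H)))⁻¹ *
        Real.exp (-(Real.log (S / S₀) - r * t + (1 / 2) * σ ^ 2 * κ * t ^ (2 * H)) ^ 2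
          / (2 * σ ^ 2 * κ * t ^ (2 * H)))) :
    ∀ S : ℝ, 0 < S → ∀ t : ℝ, 0 < t →
      deriv (fun t' => P S t') t
        = H * κ * t ^ (2 * H - 1) *
            deriv (deriv (fun S' => σ ^ 2 * S' ^ 2 * P S' t)) S
          - deriv (fun S' => r * S' * P S' t) S := by
  intro S hS t ht
  have hπ := Real.pi_pos
  have hc : (0 : ℝ) < σ ^ 2 * κ := by positivity
  have hV : (0 : ℝ) < σ ^ 2 * κ * t ^ (2 * H) := by positivity
  have hW : (0 : ℝ) < Real.sqrt (2 * π * (σ ^ 2 * κ * t ^ (2 * H))) :=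
    Real.sqrt_pos.mpr (by positivity)
  -- normalized pointwise formulas
  have hPS : ∀ x : ℝ, 0 < x → P x t =
      (x * Real.sqrt (2 * π * (σ ^ 2 * κ * t ^ (2 * H))))⁻¹ *
        Real.exp (-(Real.log (x / S₀) - r * t + σ ^ 2 * κ * t ^ (2 * H) / 2) ^ 2
          / (2 * (σ ^ 2 * κ * t ^ (2 * H)))) := by
    intro x hx
    rw [hP x hx t ht,
      show (2 * π * σ ^ 2 * κ * t ^ (2 * H) : ℝ)
          = 2 * π * (σ ^ 2 * κ * t ^ (2 * H)) from by ring,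
      show (1 / 2 * σ ^ 2 * κ * t ^ (2 * H) : ℝ)
          = σ ^ 2 * κ * t ^ (2 * H) / 2 from by ring,
      show (2 * σ ^ 2 * κ * t ^ (2 * H) : ℝ)
          = 2 * (σ ^ 2 * κ * t ^ (2 * H)) from by ring]
  have hPt : ∀ t' : ℝ, 0 < t' → P S t' =
      (S * Real.sqrt (2 * π * (σ ^ 2 * κ * t' ^ (2 * H))))⁻¹ *
        Real.exp (-(Real.log (S / S₀) - r * t' + σ ^ 2 * κ * t' ^ (2 * H) / 2) ^ 2
          / (2 * (σ ^ 2 * κ * t' ^ (2 * H)))) := by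
    intro t' ht'
    rw [hP S hS t' ht',
      show (2 * π * σ ^ 2 * κ * t' ^ (2 * H) : ℝ)
          = 2 * π * (σ ^ 2 * κ * t' ^ (2 * H)) from by ring,
      show (1 / 2 * σ ^ 2 * κ * t' ^ (2 * H) : ℝ)
          = σ ^ 2 * κ * t' ^ (2 * H) / 2 from by ring,
      show (2 * σ ^ 2 * κ * t' ^ (2 * H) : ℝ)
          = 2 * (σ ^ 2 * κ * t' ^ (2 * H)) from by ring]
  -- time derivative
  have heqt : (fun t' => P S t') =ᶠ[nhds t]
      (fun t' => (S * Real.sqrt (2 * π * (σ ^ 2 * κ * t' ^ (2 * H))))⁻¹ *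
        Real.exp (-(Real.log (S / S₀) - r * t' + σ ^ 2 * κ * t' ^ (2 * H) / 2) ^ 2
          / (2 * (σ ^ 2 * κ * t' ^ (2 * H))))) := by
    filter_upwards [eventually_gt_nhds ht] with t' ht'
    exact hPt t' ht'
  -- first-order spatial term
  have heqr : (fun S' => r * S' * P S' t) =ᶠ[nhds S]
      (fun y => r * y * ((y * Real.sqrt (2 * π * (σ ^ 2 * κ * t ^ (2 * H))))⁻¹ *
        Real.exp (-(Real.log (y / S₀) - r * t + σ ^ 2 * κ * t ^ (2 * H) / 2) ^ 2
          / (2 * (σ ^ 2 * κ * t ^ (2 * H)))))) := by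
    filter_upwards [eventually_gt_nhds hS] with y hy
    rw [hPS y hy]
  -- second-order spatial term: the inner derivative
  have heq2 : deriv (fun S' => σ ^ 2 * S' ^ 2 * P S' t) =ᶠ[nhds S]
      (fun x => σ ^ 2 * x * ((x * Real.sqrt (2 * π * (σ ^ 2 * κ * t ^ (2 * H))))⁻¹ *
          Real.exp (-(Real.log (x / S₀) - r * t + σ ^ 2 * κ * t ^ (2 * H) / 2) ^ 2
            / (2 * (σ ^ 2 * κ * t ^ (2 * H))))) *
        (1 - (Real.log (x / S₀) - r * t + σ ^ 2 * κ * t ^ (2 * H) / 2)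
            / (σ ^ 2 * κ * t ^ (2 * H)))) := by
    filter_upwards [eventually_gt_nhds hS] with x hx
    have h := gfbm_aux_sq S₀ (r * t) (σ ^ 2 * κ * t ^ (2 * H))
      (Real.sqrt (2 * π * (σ ^ 2 * κ * t ^ (2 * H)))) (σ ^ 2) hS₀ hV hW x hx
    have heqloc : (fun S' => σ ^ 2 * S' ^ 2 * P S' t) =ᶠ[nhds x]
        (fun y => σ ^ 2 * y ^ 2 *
          ((y * Real.sqrt (2 * π * (σ ^ 2 * κ * t ^ (2 * H))))⁻¹ *
            Real.exp (-(Real.log (y / S₀) - r * t + σ ^ 2 * κ * t ^ (2 * H) / 2) ^ 2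
              / (2 * (σ ^ 2 * κ * t ^ (2 * H)))))) := by
      filter_upwards [eventually_gt_nhds hx] with y hy
      rw [hPS y hy]
    exact (h.congr_of_eventuallyEq heqloc).deriv
  rw [heqt.deriv_eq, heqr.deriv_eq, heq2.deriv_eq,
    (gfbm_aux_t (σ ^ 2 * κ) r (Real.log (S / S₀)) H t S hc ht hS).deriv,
    (gfbm_aux_g S₀ (r * t) (σ ^ 2 * κ * t ^ (2 * H))
      (Real.sqrt (2 * π * (σ ^ 2 * κ * t ^ (2 * H)))) (σ ^ 2) hS₀ hV hW S hS).deriv,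
    (gfbm_aux_r S₀ (r * t) (σ ^ 2 * κ * t ^ (2 * H))
      (Real.sqrt (2 * π * (σ ^ 2 * κ * t ^ (2 * H)))) r hS₀ hV hW S hS).deriv]
  field_simp
  ring
end

section
/- (Generalized fractional Black–Scholes formula.) Let H ∈ (0,1), σ > 0, r ∈ ℝ, T > 0, E > 0, S₀ > 0, and a, b ∈ ℝ with κ := (a+b)² − 2^{2H}·a·b > 0. Set v := σ²κT^{2H}, x₀ := ln S₀, and let p(x) = (2πv)^{−1/2}·exp(−(x − x₀ + v/2)²/(2v)). Then the discounted expected call payoff satisfies e^{−rT}·∫_{ℝ} max(e^{x + rT} − E, 0)·p(x) dx = S₀·N(d₁) − E·e^{−rT}·N(d₂), where N is the standard normal cumulative distribution function, d₁ = (ln(S₀/E) + rT + (1/2)v)/√v and d₂ = (ln(S₀/E) + rT − (1/2)v)/√v. -/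
open Real MeasureTheory

/-- The standard normal cumulative distribution function. -/
noncomputable def stdNormalCDF (z : ℝ) : ℝ :=
  ∫ x in Set.Iic z, Real.exp (-x ^ 2 / 2) / Real.sqrt (2 * π)

lemma bs_integral_comp_sub_right_Ioi (f : ℝ → ℝ) (a c : ℝ) :
    ∫ x in Set.Ioi a, f (x - c) = ∫ x in Set.Ioi (a - c), f x := by
  have h₁ : MeasurePreserving (fun x : ℝ => x - c) volume volume := by
    simpa [sub_eq_add_neg] using measurePreserving_add_right (volume : Measure ℝ) (-c)
  have h₂ : MeasurableEmbedding (fun x : ℝ => x - c) :=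
    (MeasurableEquiv.subRight c).measurableEmbedding
  have := h₁.setIntegral_preimage_emb h₂ f (Set.Ioi (a - c))
  rw [show (fun x : ℝ => x - c) ⁻¹' Set.Ioi (a - c) = Set.Ioi a from by
    ext x; simp [sub_lt_sub_iff_right]] at this
  exact this

lemma bs_integrable_gauss {v : ℝ} (hv : 0 < v) (μ : ℝ) :
    Integrable (fun x : ℝ => Real.exp (-(x - μ) ^ 2 / (2 * v))) := by
  have h : Integrable (fun x : ℝ => Real.exp (-(1 / (2 * v)) * x ^ 2)) :=
    integrable_exp_neg_mul_sq (by positivity)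
  have h2 := h.comp_sub_right μ
  convert h2 using 2 with x
  field_simp

lemma bs_gauss_tail {v : ℝ} (hv : 0 < v) (μ L : ℝ) :
    ∫ x in Set.Ioi L, Real.exp (-(x - μ) ^ 2 / (2 * v)) =
      Real.sqrt v * Real.sqrt (2 * π) * stdNormalCDF ((μ - L) / Real.sqrt v) := by
  have hsv : 0 < Real.sqrt v := Real.sqrt_pos.mpr hv
  have hsq : Real.sqrt v ^ 2 = v := Real.sq_sqrt hv.le
  -- shift
  rw [bs_integral_comp_sub_right_Ioi (fun x => Real.exp (-x ^ 2 / (2 * v))) L μ]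
  -- scale
  have h2 : ∀ x : ℝ, Real.exp (-x ^ 2 / (2 * v)) =
      Real.exp (-((Real.sqrt v)⁻¹ * x) ^ 2 / 2) := by
    intro x
    have hx : ((Real.sqrt v)⁻¹ * x) ^ 2 = x ^ 2 / v := by
      rw [mul_pow, inv_pow, hsq]; ring
    rw [hx]
    exact congrArg Real.exp (by rw [neg_div, neg_div, div_div, mul_comm v 2])
  simp_rw [h2]
  rw [integral_comp_mul_left_Ioi (fun y => Real.exp (-y ^ 2 / 2)) (L - μ) (inv_pos.mpr hsv)]
  rw [inv_inv, smul_eq_mul]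
  -- flip
  have h3 := integral_comp_neg_Ioi ((Real.sqrt v)⁻¹ * (L - μ))
    (fun y : ℝ => Real.exp (-y ^ 2 / 2))
  simp only [neg_sq] at h3
  rw [h3]
  -- relate to stdNormalCDF
  have h4 : stdNormalCDF ((μ - L) / Real.sqrt v) =
      (∫ x in Set.Iic ((μ - L) / Real.sqrt v), Real.exp (-x ^ 2 / 2)) / Real.sqrt (2 * π) := by
    unfold stdNormalCDF
    rw [integral_div]
  have harg : -((Real.sqrt v)⁻¹ * (L - μ)) = (μ - L) / Real.sqrt v := by
    field_simp
    ring
  rw [harg, h4]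
  have h2π : (0 : ℝ) < Real.sqrt (2 * π) := Real.sqrt_pos.mpr (by positivity)
  field_simp

/-- **Generalized fractional Black–Scholes formula.**
With effective variance `v = σ²κ T^{2H}` and Gaussian log-price density `p`,
the discounted expected call payoff equals `S₀ N(d₁) - E e^{-rT} N(d₂)` where
`d₁ = (ln(S₀/E) + rT + v/2)/√v` and `d₂ = (ln(S₀/E) + rT - v/2)/√v`. -/
theorem gfbm_black_scholes_formula
    (H : ℝ) (hH : H ∈ Set.Ioo (0 : ℝ) 1)
    (σ : ℝ) (hσ : 0 < σ) (r : ℝ) (T : ℝ) (hT : 0 < T)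
    (E : ℝ) (hE : 0 < E) (S₀ : ℝ) (hS₀ : 0 < S₀) (a b : ℝ)
    (κ : ℝ) (hκdef : κ = (a + b) ^ 2 - (2 : ℝ) ^ (2 * H) * a * b) (hκ : 0 < κ)
    (v : ℝ) (hv : v = σ ^ 2 * κ * T ^ (2 * H))
    (x₀ : ℝ) (hx₀ : x₀ = Real.log S₀)
    (p : ℝ → ℝ)
    (hp : ∀ x : ℝ, p x = (2 * π * v) ^ (-(1 : ℝ) / 2) *
      Real.exp (-(x - x₀ + v / 2) ^ 2 / (2 * v))) :
    Real.exp (-(r * T)) * ∫ x : ℝ, max (Real.exp (x + r * T) - E) 0 * p x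
      = S₀ * stdNormalCDF ((Real.log (S₀ / E) + r * T + (1 / 2) * v) / Real.sqrt v)
        - E * Real.exp (-(r * T)) *
          stdNormalCDF ((Real.log (S₀ / E) + r * T - (1 / 2) * v) / Real.sqrt v) := by
  have hvpos : 0 < v := by
    rw [hv]
    have : (0 : ℝ) < T ^ (2 * H) := Real.rpow_pos_of_pos hT _
    positivity
  set C : ℝ := (2 * π * v) ^ (-(1 : ℝ) / 2) with hC
  have h2πv : (0 : ℝ) < 2 * π * v := by positivity
  have hCval : C = (Real.sqrt (2 * π * v))⁻¹ := by
    rw [hC, neg_div, Real.rpow_neg h2πv.le, Real.sqrt_eq_rpow]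
  have hCmul : C * (Real.sqrt v * Real.sqrt (2 * π)) = 1 := by
    rw [hCval, Real.sqrt_mul (by positivity) v]
    have h1 : (0 : ℝ) < Real.sqrt (2 * π) := Real.sqrt_pos.mpr (by positivity)
    have h2 : (0 : ℝ) < Real.sqrt v := Real.sqrt_pos.mpr hvpos
    field_simp
  set m : ℝ := x₀ - v / 2 with hm
  set L : ℝ := Real.log E - r * T with hL
  -- the integrand vanishes off Ioi L
  have hvanish : ∀ x ∉ Set.Ioi L, max (Real.exp (x + r * T) - E) 0 * p x = 0 := by
    intro x hx
    have hxL : x ≤ L := not_lt.mp hx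
    have : Real.exp (x + r * T) ≤ E := by
      rw [← Real.exp_log hE]
      exact Real.exp_le_exp.mpr (by rw [hL] at hxL; linarith)
    rw [max_eq_right (by linarith), zero_mul]
  rw [← setIntegral_eq_integral_of_forall_compl_eq_zero hvanish]
  -- on Ioi L, the max equals the value, and we complete the square
  have hstep : ∀ x ∈ Set.Ioi L, max (Real.exp (x + r * T) - E) 0 * p x =
      Real.exp (r * T) * S₀ * (C * Real.exp (-(x - (m + v)) ^ 2 / (2 * v)))
        - E * (C * Real.exp (-(x - m) ^ 2 / (2 * v))) := by
    intro x hx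
    have hxL : L < x := hx
    have hgt : E < Real.exp (x + r * T) := by
      rw [← Real.exp_log hE]
      exact Real.exp_lt_exp.mpr (by rw [hL] at hxL; linarith)
    rw [max_eq_left (by linarith)]
    rw [hp x]
    have hxm : x - x₀ + v / 2 = x - m := by rw [hm]; ring
    rw [hxm]
    have hsq : Real.exp (x + r * T) * Real.exp (-(x - m) ^ 2 / (2 * v)) =
        Real.exp (r * T) * S₀ * Real.exp (-(x - (m + v)) ^ 2 / (2 * v)) := by
      have hS : S₀ = Real.exp (m + v / 2) := by
        have hmx : m + v / 2 = x₀ := by rw [hm]; ring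
        rw [hmx, hx₀, Real.exp_log hS₀]
      rw [hS, ← Real.exp_add, ← Real.exp_add, ← Real.exp_add]
      congr 1
      field_simp
      ring
    rw [sub_mul]
    congr 1
    rw [mul_left_comm, hsq]
    ring
  rw [setIntegral_congr_fun measurableSet_Ioi hstep]
  -- split the integral
  have hint1 : IntegrableOn
      (fun x => Real.exp (r * T) * S₀ * (C * Real.exp (-(x - (m + v)) ^ 2 / (2 * v))))
      (Set.Ioi L) :=
    (((bs_integrable_gauss hvpos (m + v)).const_mul C).const_mul _).integrableOn
  have hint2 : IntegrableOn
      (fun x => E * (C * Real.exp (-(x - m) ^ 2 / (2 * v)))) (Set.Ioi L) :=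
    (((bs_integrable_gauss hvpos m).const_mul C).const_mul E).integrableOn
  rw [integral_sub hint1 hint2, integral_const_mul, integral_const_mul,
    integral_const_mul, integral_const_mul, bs_gauss_tail hvpos (m + v) L,
    bs_gauss_tail hvpos m L]
  have hlog : Real.log (S₀ / E) = Real.log S₀ - Real.log E :=
    Real.log_div hS₀.ne' hE.ne'
  have harg1 : (m + v - L) / Real.sqrt v =
      (Real.log (S₀ / E) + r * T + (1 / 2) * v) / Real.sqrt v := by
    rw [hlog, hm, hL, hx₀]; ring_nf
  have harg2 : (m - L) / Real.sqrt v =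
      (Real.log (S₀ / E) + r * T - (1 / 2) * v) / Real.sqrt v := by
    rw [hlog, hm, hL, hx₀]; ring_nf
  rw [harg1, harg2]
  have hC1 : ∀ z : ℝ, C * (Real.sqrt v * Real.sqrt (2 * π) * stdNormalCDF z) =
      stdNormalCDF z := by
    intro z
    rw [show C * (Real.sqrt v * Real.sqrt (2 * π) * stdNormalCDF z)
        = C * (Real.sqrt v * Real.sqrt (2 * π)) * stdNormalCDF z from by ring,
      hCmul, one_mul]
  rw [hC1, hC1]
  have hexp : Real.exp (-(r * T)) * Real.exp (r * T) = 1 := by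
    rw [← Real.exp_add]; simp
  set N₁ := stdNormalCDF ((Real.log (S₀ / E) + r * T + (1 / 2) * v) / Real.sqrt v)
  set N₂ := stdNormalCDF ((Real.log (S₀ / E) + r * T - (1 / 2) * v) / Real.sqrt v)
  calc Real.exp (-(r * T)) * (Real.exp (r * T) * S₀ * N₁ - E * N₂)
      = (Real.exp (-(r * T)) * Real.exp (r * T)) * (S₀ * N₁)
          - E * Real.exp (-(r * T)) * N₂ := by ring
    _ = S₀ * N₁ - E * Real.exp (-(r * T)) * N₂ := by rw [hexp, one_mul]
end

section
/- (Sub-fractional Black–Scholes formula, case a = b = 1/√2.) Let H ∈ (0,1), σ > 0, r ∈ ℝ, T > 0, E > 0, S₀ > 0. Note that for a = b = 1/√2 the gfBm variance coefficient equals (a+b)² − 2^{2H}ab = 2 − 2^{2H−1} > 0. Set v := σ²(2 − 2^{2H−1})T^{2H}, x₀ := ln S₀, and let p(x) = (2πv)^{−1/2}·exp(−(x − x₀ + v/2)²/(2v)). Then e^{−rT}·∫_{ℝ} max(e^{x + rT} − E, 0)·p(x) dx = S₀·N(d₁) − E·e^{−rT}·N(d₂), where N is the standard normal cumulative distribution function,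 d₁ = (ln(S₀/E) + rT + (1 − 2^{2H−2})σ²T^{2H})/(σ·√((2 − 2^{2H−1})T^{2H})) and d₂ = (ln(S₀/E) + rT − (1 − 2^{2H−2})σ²T^{2H})/(σ·√((2 − 2^{2H−1})T^{2H})). -/
open Real MeasureTheory

lemma BS_integral_comp_add_right_Ioi (g : ℝ → ℝ) (a c : ℝ) :
    ∫ x in Set.Ioi a, g (x + c) = ∫ x in Set.Ioi (a + c), g x := by
  have A : MeasurableEmbedding (fun x : ℝ => x + c) :=
    (Homeomorph.addRight c).measurableEmbedding
  have h := A.setIntegral_map (μ := volume) (g := g) (s := Set.Ioi (a + c))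
  rw [map_add_right_eq_self volume c] at h
  rw [h, show (fun x : ℝ => x + c) ⁻¹' Set.Ioi (a + c) = Set.Ioi a by
    rw [Set.preimage_add_const_Ioi]; simp]

lemma BS_std_tail (k : ℝ) :
    ∫ x in Set.Ioi k, Real.exp (-x ^ 2 / 2) / Real.sqrt (2 * π) = stdNormalCDF (-k) := by
  rw [stdNormalCDF, ← integral_comp_neg_Ioi]
  simp [neg_sq]

lemma BS_gauss_tail (m s k : ℝ) (hs : 0 < s) :
    ∫ x in Set.Ioi k, Real.exp (-(x - m) ^ 2 / (2 * s ^ 2)) / (s * Real.sqrt (2 * π))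
      = stdNormalCDF ((m - k) / s) := by
  have hpt : ∀ x : ℝ, Real.exp (-(x - m) ^ 2 / (2 * s ^ 2)) / (s * Real.sqrt (2 * π))
      = s⁻¹ * (Real.exp (-(s⁻¹ * (x + -m)) ^ 2 / 2) / Real.sqrt (2 * π)) := by
    intro x
    have harg : -(s⁻¹ * (x + -m)) ^ 2 / 2 = -(x - m) ^ 2 / (2 * s ^ 2) := by
      field_simp
      ring
    rw [harg]
    have hsp : Real.sqrt (2 * π) > 0 := Real.sqrt_pos.mpr (by positivity)
    field_simp
  simp_rw [hpt]
  rw [MeasureTheory.integral_const_mul]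
  rw [BS_integral_comp_add_right_Ioi (fun u => Real.exp (-(s⁻¹ * u) ^ 2 / 2) / Real.sqrt (2 * π)) k (-m)]
  rw [integral_comp_mul_left_Ioi (fun u => Real.exp (-u ^ 2 / 2) / Real.sqrt (2 * π)) _ (inv_pos.mpr hs)]
  rw [smul_eq_mul, ← mul_assoc, inv_inv, inv_mul_cancel₀ hs.ne', one_mul]
  rw [BS_std_tail]
  congr 1
  field_simp
  ring

lemma BS_gauss_integrable (s c : ℝ) (hs : 0 < s) :
    Integrable (fun x => Real.exp (-(x - c) ^ 2 / (2 * s ^ 2)) / (s * Real.sqrt (2 * π))) := by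
  have h := (integrable_exp_neg_mul_sq (b := 1 / (2 * s ^ 2)) (by positivity)).comp_sub_right c
  have e : (fun x => Real.exp (-(x - c) ^ 2 / (2 * s ^ 2)) / (s * Real.sqrt (2 * π)))
      = fun x => Real.exp (-(1 / (2 * s ^ 2)) * (x - c) ^ 2) / (s * Real.sqrt (2 * π)) := by
    funext x
    rw [show -(1 / (2 * s ^ 2)) * (x - c) ^ 2 = -(x - c) ^ 2 / (2 * s ^ 2) by ring]
  rw [e]
  exact h.div_const _

lemma BS_core (v x₀ rT E : ℝ) (hv : 0 < v) (hE : 0 < E) :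
    ∫ x : ℝ, max (Real.exp (x + rT) - E) 0 *
        (Real.exp (-(x - (x₀ - v / 2)) ^ 2 / (2 * Real.sqrt v ^ 2))
          / (Real.sqrt v * Real.sqrt (2 * π)))
      = Real.exp rT * Real.exp x₀ * stdNormalCDF ((x₀ + v / 2 + rT - Real.log E) / Real.sqrt v)
        - E * stdNormalCDF ((x₀ - v / 2 + rT - Real.log E) / Real.sqrt v) := by
  set s := Real.sqrt v with hsdef
  have hs : 0 < s := Real.sqrt_pos.mpr hv
  have hs2 : s ^ 2 = v := Real.sq_sqrt hv.le
  set m := x₀ - v / 2 with hm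
  set k := Real.log E - rT with hk
  have hind : (fun x => max (Real.exp (x + rT) - E) 0 *
        (Real.exp (-(x - m) ^ 2 / (2 * s ^ 2)) / (s * Real.sqrt (2 * π))))
      = Set.indicator (Set.Ioi k) (fun x =>
          Real.exp rT * Real.exp (m + s ^ 2 / 2) *
            (Real.exp (-(x - (m + s ^ 2)) ^ 2 / (2 * s ^ 2)) / (s * Real.sqrt (2 * π)))
          - E * (Real.exp (-(x - m) ^ 2 / (2 * s ^ 2)) / (s * Real.sqrt (2 * π)))) := by
    funext x
    by_cases hx : k < x
    · rw [Set.indicator_of_mem (Set.mem_Ioi.mpr hx)]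
      have h1 : E < Real.exp (x + rT) := by
        rw [← Real.exp_log hE]
        apply Real.exp_lt_exp.mpr
        rw [hk] at hx; linarith
      rw [max_eq_left (by linarith)]
      have h2 : Real.exp rT * Real.exp (m + s ^ 2 / 2) * Real.exp (-(x - (m + s ^ 2)) ^ 2 / (2 * s ^ 2))
          = Real.exp (x + rT) * Real.exp (-(x - m) ^ 2 / (2 * s ^ 2)) := by
        rw [← Real.exp_add, ← Real.exp_add, ← Real.exp_add]
        congr 1
        field_simp
        ring
      rw [mul_div_assoc', mul_div_assoc', mul_div_assoc', div_sub_div_same]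
      congr 1
      linear_combination -h2
    · rw [Set.indicator_of_notMem (by simpa using hx)]
      have h1 : Real.exp (x + rT) ≤ E := by
        rw [← Real.exp_log hE]
        apply Real.exp_le_exp.mpr
        rw [hk] at hx; push_neg at hx; linarith
      rw [max_eq_right (by linarith), zero_mul]
  rw [hind, MeasureTheory.integral_indicator measurableSet_Ioi,
    MeasureTheory.integral_sub
      (((BS_gauss_integrable s (m + s ^ 2) hs).const_mul _).integrableOn)
      (((BS_gauss_integrable s m hs).const_mul _).integrableOn),
    MeasureTheory.integral_const_mul, MeasureTheory.integral_const_mul,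
    BS_gauss_tail (m + s ^ 2) s k hs, BS_gauss_tail m s k hs]
  have e0 : m + s ^ 2 / 2 = x₀ := by rw [hs2, hm]; ring
  have e1 : (m + s ^ 2 - k) / s = (x₀ + v / 2 + rT - Real.log E) / s := by
    rw [hs2, hm, hk]; ring_nf
  have e2 : (m - k) / s = (x₀ - v / 2 + rT - Real.log E) / s := by
    rw [hm, hk]; ring_nf
  rw [e0, e1, e2]

/-- **Sub-fractional Black–Scholes formula (case `a = b = 1/√2`).**
For `a = b = 1/√2` the gfBm variance coefficient is
`(a+b)² - 2^{2H} a b = 2 - 2^{2H-1} > 0`.  With effective variance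
`v = σ²(2 - 2^{2H-1}) T^{2H}` and Gaussian log-price density `p`, the discounted
expected call payoff equals `S₀ N(d₁) - E e^{-rT} N(d₂)` where
`d₁ = (ln(S₀/E) + rT + (1 - 2^{2H-2})σ²T^{2H})/(σ √((2 - 2^{2H-1})T^{2H}))` and
`d₂ = (ln(S₀/E) + rT - (1 - 2^{2H-2})σ²T^{2H})/(σ √((2 - 2^{2H-1})T^{2H}))`. -/
theorem subfractional_black_scholes_formula
    (H : ℝ) (hH : H ∈ Set.Ioo (0 : ℝ) 1)
    (σ : ℝ) (hσ : 0 < σ) (r : ℝ) (T : ℝ) (hT : 0 < T)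
    (E : ℝ) (hE : 0 < E) (S₀ : ℝ) (hS₀ : 0 < S₀)
    (v : ℝ) (hv : v = σ ^ 2 * (2 - (2 : ℝ) ^ (2 * H - 1)) * T ^ (2 * H))
    (x₀ : ℝ) (hx₀ : x₀ = Real.log S₀)
    (p : ℝ → ℝ)
    (hp : ∀ x : ℝ, p x = (2 * π * v) ^ (-(1 : ℝ) / 2) *
      Real.exp (-(x - x₀ + v / 2) ^ 2 / (2 * v))) :
    (((1 / Real.sqrt 2) + (1 / Real.sqrt 2)) ^ 2
        - (2 : ℝ) ^ (2 * H) * (1 / Real.sqrt 2) * (1 / Real.sqrt 2)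
      = 2 - (2 : ℝ) ^ (2 * H - 1) ∧ 0 < 2 - (2 : ℝ) ^ (2 * H - 1)) ∧
    Real.exp (-(r * T)) * ∫ x : ℝ, max (Real.exp (x + r * T) - E) 0 * p x
      = S₀ * stdNormalCDF
          ((Real.log (S₀ / E) + r * T + (1 - (2 : ℝ) ^ (2 * H - 2)) * σ ^ 2 * T ^ (2 * H))
            / (σ * Real.sqrt ((2 - (2 : ℝ) ^ (2 * H - 1)) * T ^ (2 * H))))
        - E * Real.exp (-(r * T)) * stdNormalCDF
          ((Real.log (S₀ / E) + r * T - (1 - (2 : ℝ) ^ (2 * H - 2)) * σ ^ 2 * T ^ (2 * H))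
            / (σ * Real.sqrt ((2 - (2 : ℝ) ^ (2 * H - 1)) * T ^ (2 * H)))) := by
  obtain ⟨hH0, hH1⟩ := hH
  have h2lt : (2 : ℝ) ^ (2 * H - 1) < 2 := by
    calc (2 : ℝ) ^ (2 * H - 1) < (2 : ℝ) ^ (1 : ℝ) :=
          Real.rpow_lt_rpow_of_exponent_lt one_lt_two (by linarith)
      _ = 2 := Real.rpow_one 2
  have hκ : 0 < 2 - (2 : ℝ) ^ (2 * H - 1) := by linarith
  have hTH : 0 < T ^ (2 * H) := Real.rpow_pos_of_pos hT _
  have hvpos : 0 < v := by rw [hv]; positivity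
  have h21 : (2 : ℝ) ^ (2 * H - 1) = (2 : ℝ) ^ (2 * H) / 2 := by
    rw [Real.rpow_sub two_pos, Real.rpow_one]
  have h22 : (2 : ℝ) ^ (2 * H - 2) = (2 : ℝ) ^ (2 * H - 1) / 2 := by
    rw [show (2 * H - 2 : ℝ) = (2 * H - 1) - 1 by ring, Real.rpow_sub two_pos, Real.rpow_one]
  refine ⟨⟨?_, hκ⟩, ?_⟩
  · have hr2 : Real.sqrt 2 * Real.sqrt 2 = 2 := Real.mul_self_sqrt (by norm_num)
    have hr2ne : Real.sqrt 2 ≠ 0 := by positivity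
    rw [h21]
    field_simp
    nlinarith [hr2, Real.sq_sqrt (by norm_num : (0:ℝ) ≤ 2)]
  · have hpg : ∀ x : ℝ, p x = Real.exp (-(x - (x₀ - v / 2)) ^ 2 / (2 * Real.sqrt v ^ 2))
        / (Real.sqrt v * Real.sqrt (2 * π)) := by
      intro x
      rw [hp x]
      have h1 : (2 * π * v) ^ (-(1 : ℝ) / 2) = (Real.sqrt v * Real.sqrt (2 * π))⁻¹ := by
        rw [show (-(1 : ℝ) / 2) = -(1 / 2 : ℝ) by norm_num,
          Real.rpow_neg (by positivity), ← Real.sqrt_eq_rpow,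
          Real.sqrt_mul (by positivity) v, mul_comm]
      rw [h1, Real.sq_sqrt hvpos.le,
        show x - x₀ + v / 2 = x - (x₀ - v / 2) by ring, inv_mul_eq_div]
    simp_rw [hpg]
    rw [BS_core v x₀ (r * T) E hvpos hE]
    have hden : Real.sqrt v = σ * Real.sqrt ((2 - (2 : ℝ) ^ (2 * H - 1)) * T ^ (2 * H)) := by
      rw [hv, mul_assoc, Real.sqrt_mul (sq_nonneg σ), Real.sqrt_sq hσ.le]
    have hnum1 : x₀ + v / 2 + r * T - Real.log E
        = Real.log (S₀ / E) + r * T + (1 - (2 : ℝ) ^ (2 * H - 2)) * σ ^ 2 * T ^ (2 * H) := by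
      rw [Real.log_div hS₀.ne' hE.ne', ← hx₀, hv, h22, h21]; ring
    have hnum2 : x₀ - v / 2 + r * T - Real.log E
        = Real.log (S₀ / E) + r * T - (1 - (2 : ℝ) ^ (2 * H - 2)) * σ ^ 2 * T ^ (2 * H) := by
      rw [Real.log_div hS₀.ne' hE.ne', ← hx₀, hv, h22, h21]; ring
    rw [hnum1, hnum2, hden, hx₀, Real.exp_log hS₀, Real.exp_neg]
    have hrT : Real.exp (r * T) ≠ 0 := (Real.exp_pos _).ne'
    field_simp
end
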